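/- Let n ≥ 1 be an integer and let y₁, …, y_n : ℝ → ℝ be differentiable functions; extend them by y₀ = y_{n+1} := 0. Suppose that for every k with 1 ≤ k ≤ n and every t ∈ ℝ one has y_k′(t) = −d⁺_{2k}·y_{k−1}(t) + (d⁺_{2k} − d⁺_{2k+2})·y_k(t) + d⁺_{2k+2}·y_{k+1}(t), where d⁺_j := (j−2)²·(j+2)/(4j²). Then for every t ∈ ℝ, (d/dt)(∑_{k=1}^{n} y_k(t)²) ≤ −(3/4)·∑_{k=1}^{n} y_k(t)². -/

import Mathlib

/-- The tridiagonal coefficient `d⁺_j = (j−2)²·(j+2)/(4j²)`. -/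
noncomputable def dPlus (j : ℕ) : ℝ :=
  ((j : ℝ) - 2) ^ 2 * ((j : ℝ) + 2) / (4 * (j : ℝ) ^ 2)

lemma dPlus_gap (k : ℕ) (hk : 1 ≤ k) : dPlus (2 * k) - dPlus (2 * k + 2) ≤ -(3 / 8) := by
  have hx : (1 : ℝ) ≤ (k : ℝ) := by exact_mod_cast hk
  set x : ℝ := (k : ℝ) with hxdef
  have h1 : (4 : ℝ) * ((2 * k : ℕ) : ℝ) ^ 2 > 0 := by
    push_cast; nlinarith
  have h2 : (4 : ℝ) * ((2 * k + 2 : ℕ) : ℝ) ^ 2 > 0 := by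
    push_cast; nlinarith
  rw [dPlus, dPlus, div_sub_div _ _ (ne_of_gt h1) (ne_of_gt h2),
    div_le_iff₀ (by positivity)]
  push_cast
  nlinarith [sq_nonneg (x - 1), sq_nonneg x, sq_nonneg (x + 1),
    mul_nonneg (sub_nonneg.mpr hx) (sq_nonneg x),
    mul_nonneg (sub_nonneg.mpr hx) (sq_nonneg (x + 1)),
    mul_nonneg (mul_nonneg (sub_nonneg.mpr hx) (sq_nonneg x)) (sq_nonneg (x+1))]

/-- Galerkin version of the exponential stability of the linearized `η⁺`-evolution on even
modes: if `y_k′ = −d⁺_{2k} y_{k−1} + (d⁺_{2k} − d⁺_{2k+2}) y_k + d⁺_{2k+2} y_{k+1}` for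
`1 ≤ k ≤ n`, with `y₀ = y_{n+1} = 0`, then
`(d/dt) ∑_{k=1}^n y_k² ≤ −(3/4)·∑_{k=1}^n y_k²`. -/
theorem galerkin_decay_plus_even
    (n : ℕ) (hn : 1 ≤ n)
    (y : ℕ → ℝ → ℝ)
    (hy0 : ∀ t, y 0 t = 0)
    (hyn1 : ∀ t, y (n + 1) t = 0)
    (hODE : ∀ k : ℕ, 1 ≤ k → k ≤ n → ∀ t : ℝ,
      HasDerivAt (y k)
        (-(dPlus (2 * k)) * y (k - 1) t + (dPlus (2 * k) - dPlus (2 * k + 2)) * y k t +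
          dPlus (2 * k + 2) * y (k + 1) t) t) :
    ∀ t : ℝ,
      deriv (fun s => ∑ k ∈ Finset.Icc 1 n, y k s ^ 2) t ≤
        -(3 / 4) * ∑ k ∈ Finset.Icc 1 n, y k t ^ 2 := by
  intro t
  set f : ℕ → ℝ := fun k => 2 * dPlus (2 * k + 2) * y k t * y (k + 1) t with hf
  have hderiv : HasDerivAt (fun s => ∑ k ∈ Finset.Icc 1 n, y k s ^ 2)
      (∑ k ∈ Finset.Icc 1 n,
        (2 * (dPlus (2 * k) - dPlus (2 * k + 2)) * y k t ^ 2 + (f k - f (k - 1)))) t := by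
    have h := HasDerivAt.fun_sum (u := Finset.Icc 1 n)
      (fun k hk => ((hODE k (Finset.mem_Icc.mp hk).1 (Finset.mem_Icc.mp hk).2 t).pow 2))
    refine h.congr_deriv ?_
    apply Finset.sum_congr rfl
    intro k hk
    obtain ⟨hk1, _⟩ := Finset.mem_Icc.mp hk
    have e1 : 2 * (k - 1) + 2 = 2 * k := by omega
    have e2 : k - 1 + 1 = k := by omega
    simp only [hf, e1, e2]
    push_cast
    ring
  have htel : ∑ k ∈ Finset.Icc 1 n, (f k - f (k - 1)) = f n - f 0 := by
    rw [← Finset.Ico_add_one_right_eq_Icc, Finset.sum_Ico_eq_sum_range]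
    have : ∀ i ∈ Finset.range (n + 1 - 1), f (1 + i) - f (1 + i - 1) = f (i + 1) - f i := by
      intro i _
      congr 1 <;> congr 1 <;> omega
    rw [Finset.sum_congr rfl this]
    have : n + 1 - 1 = n := by omega
    rw [this, Finset.sum_range_sub]
  have hfn : f n = 0 := by simp [hf, hyn1 t]
  have hf0 : f 0 = 0 := by simp [hf, hy0 t]
  rw [hderiv.deriv, Finset.sum_add_distrib, htel, hfn, hf0, sub_zero,
    Finset.mul_sum]
  rw [add_zero]
  apply Finset.sum_le_sum
  intro k hk
  obtain ⟨hk1, _⟩ := Finset.mem_Icc.mp hk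
  have hgap := dPlus_gap k hk1
  nlinarith [sq_nonneg (y k t)]
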